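/- Rigid rotation density argument: let φ be a flow, γ a periodic orbit of minimal period T₁ > 0 through p, and ≪ a transitive relation preserved by the flow (a ≪ b ⟹ φ_t(a) ≪ φ_t(b) for t ≥ 0) and quasi-closed. Suppose q satisfies φ_{T₂}(q) = q for some T₂ > 0 with T₂/T₁ irrational, and φ_ε(p) ≪ q for all ε ∈ [0, ε₀] with ε₀ > 0. Then the set {φ_{nT₂}(φ_ε(p)) : n ∈ ℕ} is dense in the orbit γ, and consequently z ≤ q for every z ∈ γ, where ≤ is the quasi-closed order containing ≪. -/

import Mathlib

set_option maxHeartbeats 1000000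


/-- Rigid rotation density argument: if `γ` is a periodic orbit of minimal period
`T₁ > 0` through `p`, `q` is fixed by `φ_{T₂}` with `T₂/T₁` irrational, and
`φ_ε(p) ≪ q` for all `ε ∈ [0, ε₀]`, then `{φ_{nT₂}(φ_ε(p)) : n ∈ ℕ}` is dense in
`γ`, and `z ≤ q` for every `z ∈ γ`. -/
theorem rigid_rotation_density {M : Type*} [MetricSpace M]
    (φ : ℝ → M → M)
    (hcont : Continuous fun a : ℝ × M => φ a.1 a.2)
    (hφ0 : ∀ x, φ 0 x = x)
    (hφadd : ∀ s t : ℝ, ∀ x, φ (s + t) x = φ s (φ t x))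
    (le lt : M → M → Prop)
    (hrefl : ∀ x, le x x) (hletrans : ∀ x y z, le x y → le y z → le x z)
    (hsub : ∀ x y, lt x y → le x y)
    (hlttrans : ∀ x y z, lt x y → lt y z → lt x z)
    (hpres : ∀ a b, lt a b → ∀ t : ℝ, 0 ≤ t → lt (φ t a) (φ t b))
    (hqc : ∀ (as bs : ℕ → M) (a b : M), Filter.Tendsto as Filter.atTop (nhds a) →
      Filter.Tendsto bs Filter.atTop (nhds b) → (∀ n, lt (as n) (bs n)) → le a b)
    (p q : M) (T₁ T₂ : ℝ) (hT₁ : 0 < T₁) (hT₂ : 0 < T₂)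
    (hperiodic : φ T₁ p = p)
    (hminimal : ∀ t : ℝ, 0 < t → t < T₁ → φ t p ≠ p)
    (hqfix : φ T₂ q = q)
    (hirr : Irrational (T₂ / T₁))
    (ε₀ : ℝ) (hε₀ : 0 < ε₀)
    (hlt : ∀ ε ∈ Set.Icc 0 ε₀, lt (φ ε p) q) :
    (∀ ε ∈ Set.Icc 0 ε₀,
      {z : M | ∃ t : ℝ, z = φ t p} ⊆
        closure {z : M | ∃ n : ℕ, z = φ ((n : ℝ) * T₂) (φ ε p)}) ∧
    (∀ z : M, (∃ t : ℝ, z = φ t p) → le z q) := by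
  haveI : Fact (0 < T₁) := ⟨hT₁⟩
  -- p is fixed by integer multiples of T₁
  have hN : ∀ n : ℕ, φ ((n : ℝ) * T₁) p = p := by
    intro n
    induction n with
    | zero => simpa using hφ0 p
    | succ n ih =>
      push_cast
      rw [add_mul, one_mul, hφadd, hperiodic, ih]
  have hZ : ∀ n : ℤ, φ ((n : ℝ) * T₁) p = p := by
    intro n
    rcases n.eq_nat_or_neg with ⟨m, rfl | rfl⟩
    · exact_mod_cast hN m
    · have h1 : φ (-((m : ℝ) * T₁)) (φ ((m : ℝ) * T₁) p) = p := by
        rw [← hφadd]; simpa using hφ0 p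
      rw [hN m] at h1
      push_cast
      convert h1 using 2
      ring
  -- well-definedness of the map on the circle
  have hper : ∀ a b : ℝ, a - b ∈ AddSubgroup.zmultiples T₁ → φ a p = φ b p := by
    intro a b hab
    rcases hab with ⟨n, hn⟩
    simp only [zsmul_eq_mul] at hn
    have : a = b + (n : ℝ) * T₁ := by linarith
    rw [this, hφadd, hZ]
  set F : AddCircle T₁ → M := fun x =>
    Quotient.liftOn' x (fun t => φ t p) (by
      intro a b hab
      rw [QuotientAddGroup.leftRel_apply] at hab
      exact (hper b a (by simpa [neg_add_eq_sub] using hab)).symm) with hFdef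
  have hF : ∀ t : ℝ, F (t : AddCircle T₁) = φ t p := fun t => rfl
  have hFcont : Continuous F := by
    apply Continuous.quotient_liftOn'
    have : Continuous fun t : ℝ => φ t p := by
      have := hcont.comp (continuous_id.prodMk (continuous_const : Continuous fun _ : ℝ => p))
      exact this
    exact this
  -- density of ℤ-multiples of T₂ in the circle
  have hSdense : Dense ((AddSubgroup.closure ({T₁, T₂} : Set ℝ) : AddSubgroup ℝ) : Set ℝ) := by
    rcases (AddSubgroup.closure ({T₁, T₂} : Set ℝ)).dense_or_cyclic with h | ⟨a, ha⟩
    · exact h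
    · exfalso
      have hT₁mem : T₁ ∈ AddSubgroup.closure ({T₁, T₂} : Set ℝ) :=
        AddSubgroup.subset_closure (by simp)
      have hT₂mem : T₂ ∈ AddSubgroup.closure ({T₁, T₂} : Set ℝ) :=
        AddSubgroup.subset_closure (by simp)
      rw [ha, AddSubgroup.mem_closure_singleton] at hT₁mem hT₂mem
      obtain ⟨m, hm⟩ := hT₁mem
      obtain ⟨n, hn⟩ := hT₂mem
      have ha0 : a ≠ 0 := by
        rintro rfl; simp at hm; exact hT₁.ne' hm.symm
      have hm0 : (m : ℝ) ≠ 0 := by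
        intro h
        rw [zsmul_eq_mul, h, zero_mul] at hm
        exact hT₁.ne' hm.symm
      apply hirr
      refine ⟨(n : ℚ) / (m : ℚ), ?_⟩
      rw [← hm, ← hn]
      push_cast
      rw [zsmul_eq_mul, zsmul_eq_mul]
      field_simp
  have hπcont : Continuous ((↑·) : ℝ → AddCircle T₁) := continuous_quotient_mk'
  have hπsurj : DenseRange ((↑·) : ℝ → AddCircle T₁) :=
    QuotientAddGroup.mk_surjective.denseRange
  have himg : Dense (((↑·) : ℝ → AddCircle T₁) '' (AddSubgroup.closure ({T₁, T₂} : Set ℝ))) :=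
    hπsurj.dense_image hπcont hSdense
  have hsub2 : (((↑·) : ℝ → AddCircle T₁) '' (AddSubgroup.closure ({T₁, T₂} : Set ℝ))) ⊆
      Set.range (fun n : ℤ => n • (T₂ : AddCircle T₁)) := by
    rintro x ⟨y, hy, rfl⟩
    induction hy using AddSubgroup.closure_induction with
    | mem z hz =>
      rcases hz with h | h
      · refine ⟨0, ?_⟩
        show (0 : ℤ) • (T₂ : AddCircle T₁) = ((z : ℝ) : AddCircle T₁)
        rw [zero_zsmul, h]; exact (AddCircle.coe_period T₁).symm
      · refine ⟨1, ?_⟩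
        show (1 : ℤ) • (T₂ : AddCircle T₁) = ((z : ℝ) : AddCircle T₁)
        rw [one_zsmul, h]
    | zero =>
      refine ⟨0, ?_⟩
      show (0 : ℤ) • (T₂ : AddCircle T₁) = ((0 : ℝ) : AddCircle T₁)
      rw [zero_zsmul]; rfl
    | add a b _ _ ha hb =>
      rcases ha with ⟨na, hna⟩; rcases hb with ⟨nb, hnb⟩
      simp only at hna hnb
      refine ⟨na + nb, ?_⟩
      show (na + nb) • (T₂ : AddCircle T₁) = ((a + b : ℝ) : AddCircle T₁)
      rw [add_zsmul, hna, hnb, AddCircle.coe_add]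
    | neg a _ ha =>
      rcases ha with ⟨na, hna⟩
      simp only at hna
      refine ⟨-na, ?_⟩
      show (-na) • (T₂ : AddCircle T₁) = ((-a : ℝ) : AddCircle T₁)
      rw [neg_zsmul, hna]; rfl
  have hzdense : DenseRange (fun n : ℤ => n • (T₂ : AddCircle T₁)) :=
    himg.mono hsub2
  have hndense : DenseRange (fun n : ℕ => n • (T₂ : AddCircle T₁)) := by
    rwa [denseRange_zsmul_iff_nsmul] at hzdense
  -- Part 1
  have part1 : ∀ ε ∈ Set.Icc 0 ε₀,
      {z : M | ∃ t : ℝ, z = φ t p} ⊆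
        closure {z : M | ∃ n : ℕ, z = φ ((n : ℝ) * T₂) (φ ε p)} := by
    intro ε hε z hz
    rcases hz with ⟨t, rfl⟩
    have key : ∀ n : ℕ, F ((ε : AddCircle T₁) + n • (T₂ : AddCircle T₁))
        = φ ((n : ℝ) * T₂) (φ ε p) := by
      intro n
      have h1 : (ε : AddCircle T₁) + n • (T₂ : AddCircle T₁)
          = ((ε + n • T₂ : ℝ) : AddCircle T₁) := by
        rw [AddCircle.coe_add, AddCircle.coe_nsmul]
      rw [h1, hF, show (ε + n • T₂ : ℝ) = (n : ℝ) * T₂ + ε by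
        rw [nsmul_eq_mul]; ring, hφadd]
    have hcdense : DenseRange (fun n : ℕ => (ε : AddCircle T₁) + n • (T₂ : AddCircle T₁)) := by
      have : DenseRange ((fun y => (ε : AddCircle T₁) + y) ∘ fun n : ℕ => n • (T₂ : AddCircle T₁)) :=
        DenseRange.comp ((Homeomorph.addLeft (ε : AddCircle T₁)).surjective.denseRange)
          hndense (continuous_add_left _)
      exact this
    have hmem : (t : AddCircle T₁) ∈
        closure (Set.range (fun n : ℕ => (ε : AddCircle T₁) + n • (T₂ : AddCircle T₁))) :=
      hcdense _
    have : F (t : AddCircle T₁) ∈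
        closure (F '' Set.range (fun n : ℕ => (ε : AddCircle T₁) + n • (T₂ : AddCircle T₁))) := by
      apply image_closure_subset_closure_image hFcont
      exact Set.mem_image_of_mem F hmem
    rw [hF] at this
    refine closure_mono ?_ this
    rintro x ⟨y, ⟨n, rfl⟩, rfl⟩
    refine ⟨n, ?_⟩
    show F ((ε : AddCircle T₁) + n • (T₂ : AddCircle T₁)) = φ ((n : ℝ) * T₂) (φ ε p)
    exact key n
  refine ⟨part1, ?_⟩
  -- Part 2
  intro z hz
  have h0 : (0 : ℝ) ∈ Set.Icc (0 : ℝ) ε₀ := ⟨le_refl _, hε₀.le⟩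
  have hzcl := part1 0 h0 hz
  rw [mem_closure_iff_seq_limit] at hzcl
  obtain ⟨u, hu, hlim⟩ := hzcl
  have hqN : ∀ n : ℕ, φ ((n : ℝ) * T₂) q = q := by
    intro n
    induction n with
    | zero => simpa using hφ0 q
    | succ n ih =>
      push_cast
      rw [add_mul, one_mul, hφadd, hqfix, ih]
  have hltu : ∀ n, lt (u n) q := by
    intro n
    obtain ⟨m, hm⟩ := hu n
    rw [hm, hφ0]
    have := hpres p q (by simpa [hφ0] using hlt 0 h0) ((m : ℝ) * T₂)
      (by positivity)
    rwa [hqN] at this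
  exact hqc u (fun _ => q) z q hlim tendsto_const_nhds hltu
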